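/- The function y ↦ ₂F₁(1/6, 5/6; 1; 1/2 + y/2) / ₂F₁(1/6, 5/6; 1; 1/2 − y/2) is a Pfaffian function of order 9 and degree (3,1) on the open interval (0,1). -/

import Mathlib

open Set

/-- The (real) Gaussian hypergeometric function
`₂F₁(a,b;c;x) = Σ_{n≥0} ((a)_n (b)_n / ((c)_n n!)) xⁿ`. -/
noncomputable def hyp2F1 (a b c x : ℝ) : ℝ :=
  ∑' n : ℕ,
    Polynomial.eval a (ascPochhammer ℝ n) * Polynomial.eval b (ascPochhammer ℝ n) /
      (Polynomial.eval c (ascPochhammer ℝ n) * (n.factorial : ℝ)) * x ^ n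

/-- `f : Fin r → ℝ → ℝ` is a *Pfaffian chain* of order `r` and degree `α` on the open
interval `(a,b)`: each `f i` is real analytic on `(a,b)` and satisfies
`(f i)' x = P_i (x, f 0 x, …, f i x)` for a real polynomial `P_i` of total degree at most `α`. -/
def IsPfaffianChain (r α : ℕ) (a b : ℝ) (f : Fin r → ℝ → ℝ) : Prop :=
  (∀ i : Fin r, AnalyticOnNhd ℝ (f i) (Set.Ioo a b)) ∧
  ∀ i : Fin r, ∃ P : MvPolynomial (Fin ((i : ℕ) + 2)) ℝ,
    P.totalDegree ≤ α ∧
    ∀ x ∈ Set.Ioo a b,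
      HasDerivAt (f i)
        (MvPolynomial.eval
          (Fin.cons x (fun j : Fin ((i : ℕ) + 1) => f (Fin.castLE i.isLt j) x)) P) x

/-- `F` is a *Pfaffian function* of order `r` and degree `(α, β)` on the open interval `(a,b)`:
`F x = Q(x, f 0 x, …, f (r-1) x)` for some Pfaffian chain `f` of order `r` and degree `α` on
`(a,b)` and some real polynomial `Q` of total degree at most `β`. -/
def IsPfaffianFunction (r α β : ℕ) (a b : ℝ) (F : ℝ → ℝ) : Prop :=
  ∃ f : Fin r → ℝ → ℝ, IsPfaffianChain r α a b f ∧
    ∃ Q : MvPolynomial (Fin (r + 1)) ℝ, Q.totalDegree ≤ β ∧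
      F = fun x => MvPolynomial.eval (Fin.cons x fun j : Fin r => f j x) Q

noncomputable def cc (n : ℕ) : ℝ :=
  Polynomial.eval ((1:ℝ)/6) (ascPochhammer ℝ n) * Polynomial.eval ((5:ℝ)/6) (ascPochhammer ℝ n) /
      (Polynomial.eval (1:ℝ) (ascPochhammer ℝ n) * (n.factorial : ℝ))

lemma ascPoch_pos {x : ℝ} (hx : 0 < x) (n : ℕ) : 0 < Polynomial.eval x (ascPochhammer ℝ n) := by
  induction n with
  | zero => simp
  | succ n ih =>
    rw [ascPochhammer_succ_eval]
    have : (0:ℝ) < x + n := by positivity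
    positivity

lemma cc_pos (n : ℕ) : 0 < cc n := by
  unfold cc
  have h1 := ascPoch_pos (by norm_num : (0:ℝ) < 1/6) n
  have h2 := ascPoch_pos (by norm_num : (0:ℝ) < 5/6) n
  have h3 := ascPoch_pos (by norm_num : (0:ℝ) < 1) n
  have h4 : (0:ℝ) < n.factorial := by positivity
  positivity

lemma cc_rec (n : ℕ) : ((n:ℝ)+1)^2 * cc (n+1) = ((n:ℝ)+1/6) * ((n:ℝ)+5/6) * cc n := by
  unfold cc
  rw [ascPochhammer_succ_eval, ascPochhammer_succ_eval, ascPochhammer_succ_eval,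
    Nat.factorial_succ]
  have h3 := ascPoch_pos (by norm_num : (0:ℝ) < 1) n
  have h4 : (0:ℝ) < n.factorial := by positivity
  push_cast
  field_simp
  ring

lemma cc_zero : cc 0 = 1 := by simp [cc]

lemma cc_one : cc 1 = 5/36 := by
  have := cc_rec 0
  rw [cc_zero] at this
  norm_num at this
  linarith

lemma cc_le_one (n : ℕ) : cc n ≤ 1 := by
  induction n with
  | zero => simp [cc_zero]
  | succ n ih =>
    have h := cc_rec n
    have hp := cc_pos n
    nlinarith [sq_nonneg ((n:ℝ)+1), cc_pos (n+1)]

noncomputable def dd (n : ℕ) : ℝ := ((n:ℝ)+1) * cc (n+1)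
noncomputable def ee (n : ℕ) : ℝ := ((n:ℝ)+1) * dd (n+1)

lemma dd_pos (n : ℕ) : 0 < dd n := by
  have := cc_pos (n+1); unfold dd; positivity

lemma dd_le (n : ℕ) : dd n ≤ (n:ℝ)+1 := by
  have := cc_le_one (n+1)
  have h : (0:ℝ) < (n:ℝ)+1 := by positivity
  calc dd n ≤ ((n:ℝ)+1) * 1 := by unfold dd; nlinarith
  _ = (n:ℝ)+1 := by ring

lemma ee_pos (n : ℕ) : 0 < ee n := by
  have := dd_pos (n+1); unfold ee; positivity

lemma ee_le (n : ℕ) : ee n ≤ 2*((n:ℝ)+1)^2 := by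
  have h := dd_le (n+1)
  have h2 : (0:ℝ) < (n:ℝ)+1 := by positivity
  unfold ee
  push_cast at h ⊢
  nlinarith

lemma summable_pow_aux (k : ℕ) {y : ℝ} (h0 : 0 < y) (h1 : y < 1) :
    Summable fun n : ℕ => ((n:ℝ)+1)^k * y^n := by
  have hb : ‖y‖ < 1 := by rw [Real.norm_eq_abs, abs_of_pos h0]; exact h1
  have h2 := (summable_nat_add_iff (f := fun n : ℕ => (n:ℝ)^k * y^n) 1).mpr (summable_pow_mul_geometric_of_norm_lt_one (k := k) hb)
  have h3 : Summable fun n : ℕ => y * (((n:ℝ)+1)^k * y^n) := by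
    refine h2.congr fun n => ?_
    push_cast
    ring
  exact (summable_mul_left_iff h0.ne').mp h3

lemma summable_main {m : ℕ → ℝ} {C : ℝ} (hm : ∀ n, |m n| ≤ C * ((n:ℝ)+1)^2) {x : ℝ}
    (hx : |x| < 1) : Summable fun n => m n * x ^ n := by
  set y : ℝ := (|x|+1)/2 with hy
  have hy0 : 0 < y := by positivity
  have hy1 : y < 1 := by rw [hy]; linarith
  have hxy : |x| ≤ y := by rw [hy]; linarith
  have hC : 0 ≤ C := by have := (abs_nonneg (m 0)).trans (hm 0); simpa using this
  refine Summable.of_norm_bounded (g := fun n => C * (((n:ℝ)+1)^2 * y^n)) ?_ fun n => ?_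
  · exact (summable_pow_aux 2 hy0 hy1).mul_left C
  · rw [Real.norm_eq_abs, abs_mul, abs_pow]
    have h1 : |x|^n ≤ y^n := pow_le_pow_left₀ (abs_nonneg x) hxy n
    have h2 := hm n
    have h3 : (0:ℝ) ≤ C * ((n:ℝ)+1)^2 := by positivity
    have h4 : (0:ℝ) ≤ |x|^n := by positivity
    calc |m n| * |x|^n ≤ (C * ((n:ℝ)+1)^2) * |x|^n := mul_le_mul_of_nonneg_right h2 h4
      _ ≤ (C*((n:ℝ)+1)^2) * y^n := mul_le_mul_of_nonneg_left h1 h3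
      _ = C * (((n:ℝ)+1)^2 * y^n) := by ring

lemma hasFPowerSeries_aux {m : ℕ → ℝ} {C : ℝ} (hm : ∀ n, |m n| ≤ C * ((n:ℝ)+1)^2)
    {r : ℝ} (hr0 : 0 < r) (hr1 : r < 1) :
    HasFPowerSeriesOnBall (fun x => ∑' n, m n * x ^ n)
      (FormalMultilinearSeries.ofScalars ℝ m) 0 (ENNReal.ofReal r) := by
  have habs : ∀ n, |(|m n|)| ≤ C * ((n:ℝ)+1)^2 := by
    intro n; rw [abs_abs]; exact hm n
  constructor
  · -- r_le
    have hsum : Summable fun n => ‖FormalMultilinearSeries.ofScalars ℝ m n‖ * r ^ n := by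
      simp only [FormalMultilinearSeries.ofScalars_norm, Real.norm_eq_abs]
      exact summable_main habs (by rw [abs_of_pos hr0]; exact hr1)
    have h := FormalMultilinearSeries.le_radius_of_summable_norm
      (FormalMultilinearSeries.ofScalars ℝ m) (r := r.toNNReal)
      (by rwa [Real.coe_toNNReal _ hr0.le])
    rwa [ENNReal.ofReal]
  · exact ENNReal.ofReal_pos.mpr hr0
  · intro y hy
    rw [EMetric.mem_ball, edist_zero_right, ← ofReal_norm,
      ENNReal.ofReal_lt_ofReal_iff hr0] at hy
    have hy1 : |y| < 1 := lt_trans (by rwa [Real.norm_eq_abs] at hy) hr1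
    have hs : Summable fun n => m n * y ^ n := summable_main hm hy1
    simp only [FormalMultilinearSeries.ofScalars_apply_eq, smul_eq_mul, zero_add]
    exact hs.hasSum

lemma analyticOnNhd_aux {m : ℕ → ℝ} {C : ℝ} (hm : ∀ n, |m n| ≤ C * ((n:ℝ)+1)^2) :
    AnalyticOnNhd ℝ (fun x => ∑' n, m n * x ^ n) (Ioo (0:ℝ) 1) := by
  intro x hx
  obtain ⟨hx0, hx1⟩ := hx
  have hr0 : (0:ℝ) < (x+1)/2 := by linarith
  have hr1 : (x+1)/2 < 1 := by linarith
  refine (hasFPowerSeries_aux hm hr0 hr1).analyticAt_of_mem ?_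
  rw [EMetric.mem_ball, edist_zero_right, ← ofReal_norm,
    ENNReal.ofReal_lt_ofReal_iff hr0, Real.norm_eq_abs, abs_of_pos hx0]
  linarith

lemma hasDerivAt_aux {m : ℕ → ℝ} {C : ℝ} (hm : ∀ n, |m n| ≤ C * ((n:ℝ)+1)^2)
    {x : ℝ} (hx : x ∈ Ioo (0:ℝ) 1) :
    HasDerivAt (fun t => ∑' n, m n * t ^ n) (∑' n : ℕ, (((n:ℝ)+1) * m (n+1)) * x ^ n) x := by
  have hC : 0 ≤ C := by have := (abs_nonneg (m 0)).trans (hm 0); simpa using this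
  obtain ⟨hx0, hx1⟩ := hx
  set r : ℝ := (x+1)/2 with hrdef
  have hr0 : 0 < r := by rw [hrdef]; linarith
  have hrx : x < r := by rw [hrdef]; linarith
  have hr1 : r < 1 := by rw [hrdef]; linarith
  set u : ℕ → ℝ := fun n => C * ((n:ℝ)+1)^3 * r ^ n / r with hudef
  have hu : Summable u := by
    have h := ((summable_pow_aux 3 hr0 hr1).mul_left C).div_const r
    refine h.congr fun n => ?_
    rw [hudef]; ring
  have hbound : ∀ (n : ℕ) (t : ℝ), t ∈ Ioo (-r) r → ‖m n * (↑n * t ^ (n-1))‖ ≤ u n := by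
    intro n t ht
    have htr : |t| ≤ r := by
      rw [abs_le]; exact ⟨ht.1.le, ht.2.le⟩
    rw [Real.norm_eq_abs, abs_mul, abs_mul, abs_pow]
    match n with
    | 0 =>
      simp only [Nat.cast_zero, abs_zero, zero_mul, mul_zero]
      rw [hudef]; positivity
    | (n+1) =>
      have h1 : |t|^(n+1-1) ≤ r^n := by
        simpa using pow_le_pow_left₀ (abs_nonneg t) htr n
      have h2 := hm (n+1)
      have hn : |((n:ℝ)+1)| = (n:ℝ)+1 := abs_of_pos (by positivity)
      have hru : u (n+1) = C * ((n:ℝ)+2)^3 * r^n := by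
        rw [hudef]
        field_simp
        push_cast
        ring
      rw [hru]
      push_cast [hn] at h2 ⊢
      have hrn : (0:ℝ) ≤ r^n := by positivity
      have habs : 0 ≤ |m (n+1)| := abs_nonneg _
      have h3 : |m (n+1)| * (((n:ℝ)+1) * |t|^(n+1-1)) ≤ (C*((n:ℝ)+2)^2) * (((n:ℝ)+1) * r^n) := by
        have := mul_le_mul h2 (mul_le_mul_of_nonneg_left h1 (by positivity : (0:ℝ) ≤ (n:ℝ)+1))
          (by positivity) (by nlinarith)
        refine this.trans_eq ?_
        ring
      calc |m (n+1)| * (((n:ℝ)+1) * |t|^(n+1-1)) ≤ (C*((n:ℝ)+2)^2) * (((n:ℝ)+1) * r^n) := h3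
        _ ≤ C * ((n:ℝ)+2)^3 * r^n := by nlinarith
  have hderiv : ∀ (n : ℕ) (t : ℝ), t ∈ Ioo (-r) r →
      HasDerivAt (fun z : ℝ => m n * z^n) (m n * (↑n * t^(n-1))) t :=
    fun n t _ => (hasDerivAt_pow n t).const_mul (m n)
  have h0 : Summable fun n => m n * (0:ℝ)^n := summable_main hm (by norm_num)
  have hmem : x ∈ Ioo (-r) r := ⟨by linarith, hrx⟩
  have h := hasDerivAt_tsum_of_isPreconnected hu isOpen_Ioo (convex_Ioo (-r) r).isPreconnected
    hderiv hbound (⟨by linarith, hr0⟩ : (0:ℝ) ∈ Ioo (-r) r) h0 hmem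
  refine h.congr_deriv ?_
  symm
  have hs : Summable fun n => m n * (↑n * x^(n-1)) :=
    Summable.of_norm_bounded hu fun n => hbound n x hmem
  rw [hs.tsum_eq_zero_add]
  simp only [Nat.cast_zero, zero_mul, mul_zero, zero_add]
  refine tsum_congr fun n => ?_
  push_cast [Nat.add_sub_cancel]
  ring

noncomputable def gg (x : ℝ) : ℝ := ∑' n : ℕ, cc n * x ^ n
noncomputable def gg1 (x : ℝ) : ℝ := ∑' n : ℕ, dd n * x ^ n
noncomputable def gg2 (x : ℝ) : ℝ := ∑' n : ℕ, ee n * x ^ n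

lemma cc_abs (n : ℕ) : |cc n| ≤ 1 * ((n:ℝ)+1)^2 := by
  rw [abs_of_pos (cc_pos n), one_mul]
  have := cc_le_one n
  nlinarith [Nat.cast_nonneg (α := ℝ) n]

lemma dd_abs (n : ℕ) : |dd n| ≤ 1 * ((n:ℝ)+1)^2 := by
  rw [abs_of_pos (dd_pos n), one_mul]
  have := dd_le n
  nlinarith [Nat.cast_nonneg (α := ℝ) n]

lemma ee_abs (n : ℕ) : |ee n| ≤ 2 * ((n:ℝ)+1)^2 := by
  rw [abs_of_pos (ee_pos n)]; exact ee_le n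

lemma dd1_abs (n : ℕ) : |dd (n+1)| ≤ 2 * ((n:ℝ)+1)^2 := by
  rw [abs_of_pos (dd_pos (n+1))]
  have := dd_le (n+1)
  push_cast at this
  nlinarith [Nat.cast_nonneg (α := ℝ) n]

lemma cc1_abs (n : ℕ) : |cc (n+1)| ≤ 1 * ((n:ℝ)+1)^2 := by
  rw [abs_of_pos (cc_pos (n+1)), one_mul]
  have := cc_le_one (n+1)
  nlinarith [Nat.cast_nonneg (α := ℝ) n]

lemma gg_an : AnalyticOnNhd ℝ gg (Ioo (0:ℝ) 1) := analyticOnNhd_aux cc_abs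
lemma gg1_an : AnalyticOnNhd ℝ gg1 (Ioo (0:ℝ) 1) := analyticOnNhd_aux dd_abs

lemma gg_deriv {x : ℝ} (hx : x ∈ Ioo (0:ℝ) 1) : HasDerivAt gg (gg1 x) x :=
  hasDerivAt_aux cc_abs hx

lemma gg1_deriv {x : ℝ} (hx : x ∈ Ioo (0:ℝ) 1) : HasDerivAt gg1 (gg2 x) x :=
  hasDerivAt_aux dd_abs hx

lemma gg_pos {x : ℝ} (hx : x ∈ Ioo (0:ℝ) 1) : 0 < gg x := by
  obtain ⟨hx0, hx1⟩ := hx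
  have hxa : |x| < 1 := by rw [abs_of_pos hx0]; exact hx1
  have sc := summable_main cc_abs hxa
  have h := sc.le_tsum 0 (fun j _ => mul_nonneg (cc_pos j).le (pow_nonneg hx0.le j))
  have h0 : cc 0 * x ^ 0 = 1 := by rw [cc_zero]; simp
  rw [h0] at h
  calc (0:ℝ) < 1 := one_pos
    _ ≤ gg x := h

lemma gg_ode {x : ℝ} (hx : x ∈ Ioo (0:ℝ) 1) :
    gg2 x * (x * (1-x)) = (2*x-1) * gg1 x + (5/36) * gg x := by
  obtain ⟨hx0, hx1⟩ := hx
  have hxa : |x| < 1 := by rw [abs_of_pos hx0]; exact hx1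
  have sc : Summable fun n => cc n * x ^ n := summable_main cc_abs hxa
  have sd : Summable fun n => dd n * x ^ n := summable_main dd_abs hxa
  have se : Summable fun n => ee n * x ^ n := summable_main ee_abs hxa
  have sd1 : Summable fun n => dd (n+1) * x ^ n := summable_main dd1_abs hxa
  have sc1 : Summable fun n => cc (n+1) * x ^ n := summable_main cc1_abs hxa
  set k : ℕ → ℝ := fun n => ee n - 2*dd n + dd (n+1) - (5/36)*cc (n+1) with hk
  have kbound : ∀ n, |k n| ≤ 7 * ((n:ℝ)+1)^2 := by
    intro n
    rw [hk, abs_le]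
    have h1 := ee_pos n; have h2 := ee_le n
    have h3 := dd_pos n; have h4 := dd_le n
    have h5 := dd_pos (n+1); have h6 := dd_le (n+1)
    have h7 := cc_pos (n+1); have h8 := cc_le_one (n+1)
    have h9 : (0:ℝ) ≤ (n:ℝ) := Nat.cast_nonneg n
    push_cast at h6
    constructor <;> nlinarith
  have sk : Summable fun n => k n * x ^ n := summable_main kbound hxa
  have k0 : k 0 = 0 := by
    have h := cc_rec 1
    have h1 := cc_one
    rw [hk]
    show ee 0 - 2*dd 0 + dd 1 - (5/36)*cc 1 = 0
    unfold ee dd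
    norm_num at h ⊢
    linarith
  have krec : ∀ n : ℕ, k (n+1) = ee n := by
    intro n
    have h := cc_rec (n+2)
    rw [hk]
    show ee (n+1) - 2*dd (n+1) + dd (n+2) - (5/36)*cc (n+2) = ee n
    unfold ee dd
    push_cast at h ⊢
    linear_combination h
  have key : ∑' n : ℕ, k n * x ^ n = x * gg2 x := by
    rw [sk.tsum_eq_zero_add, k0]
    simp only [pow_zero, zero_mul, mul_one, zero_add]
    have hcongr : ∀ n : ℕ, k (n+1) * x ^ (n+1) = x * (ee n * x ^ n) := by
      intro n; rw [krec n]; ring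
    rw [tsum_congr hcongr, tsum_mul_left]
    rfl
  have split : ∑' n : ℕ, k n * x ^ n =
      gg2 x - 2 * gg1 x + (∑' n : ℕ, dd (n+1) * x ^ n)
        - (5/36) * (∑' n : ℕ, cc (n+1) * x ^ n) := by
    have hfun : (fun n : ℕ => k n * x ^ n) = fun n : ℕ =>
        ((ee n * x ^ n - 2*(dd n * x ^ n)) + dd (n+1) * x ^ n) - (5/36)*(cc (n+1) * x ^ n) := by
      funext n; rw [hk]; ring
    rw [hfun, Summable.tsum_sub (((se.sub (sd.mul_left 2)).add sd1)) (sc1.mul_left (5/36)),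
      Summable.tsum_add (se.sub (sd.mul_left 2)) sd1, Summable.tsum_sub se (sd.mul_left 2),
      tsum_mul_left, tsum_mul_left]
    rfl
  have hA : gg1 x = 5/36 + x * (∑' n : ℕ, dd (n+1) * x ^ n) := by
    have h0 : dd 0 * x ^ 0 = 5/36 := by
      unfold dd; rw [cc_one]; norm_num
    rw [show gg1 x = ∑' n : ℕ, dd n * x ^ n from rfl, sd.tsum_eq_zero_add, h0]
    congr 1
    have hcongr : ∀ n : ℕ, dd (n+1) * x ^ (n+1) = x * (dd (n+1) * x ^ n) := by
      intro n; ring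
    rw [tsum_congr hcongr, tsum_mul_left]
  have hB : gg x = 1 + x * (∑' n : ℕ, cc (n+1) * x ^ n) := by
    have h0 : cc 0 * x ^ 0 = 1 := by rw [cc_zero]; simp
    rw [show gg x = ∑' n : ℕ, cc n * x ^ n from rfl, sc.tsum_eq_zero_add, h0]
    congr 1
    have hcongr : ∀ n : ℕ, cc (n+1) * x ^ (n+1) = x * (cc (n+1) * x ^ n) := by
      intro n; ring
    rw [tsum_congr hcongr, tsum_mul_left]
  set A := ∑' n : ℕ, dd (n+1) * x ^ n
  set B := ∑' n : ℕ, cc (n+1) * x ^ n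
  have h1 : gg2 x - 2 * gg1 x + A - (5/36) * B = x * gg2 x := by
    rw [← split, key]
  linear_combination x * h1 + hA - (5/36) * hB

noncomputable def Pp (y : ℝ) : ℝ := (1 - y^2)⁻¹
noncomputable def Z1 (y : ℝ) : ℝ := gg1 (1/2 + y/2) / (2 * gg (1/2 + y/2))
noncomputable def Z2 (y : ℝ) : ℝ := -(gg1 (1/2 - y/2) / (2 * gg (1/2 - y/2)))
noncomputable def Wf (y : ℝ) : ℝ := gg (1/2 + y/2) / gg (1/2 - y/2)

lemma memp {y : ℝ} (hy : y ∈ Ioo (0:ℝ) 1) : 1/2 + y/2 ∈ Ioo (0:ℝ) 1 :=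
  ⟨by linarith [hy.1, hy.2], by linarith [hy.1, hy.2]⟩

lemma memm {y : ℝ} (hy : y ∈ Ioo (0:ℝ) 1) : 1/2 - y/2 ∈ Ioo (0:ℝ) 1 :=
  ⟨by linarith [hy.1, hy.2], by linarith [hy.1, hy.2]⟩

lemma affp_an : AnalyticOnNhd ℝ (fun y : ℝ => 1/2 + y/2) (Ioo (0:ℝ) 1) := by
  have h : (fun y : ℝ => 1/2 + y/2) = fun y : ℝ => 1/2 + y * (1/2) := by funext y; ring
  rw [h]
  exact analyticOnNhd_const.add (analyticOnNhd_id.mul analyticOnNhd_const)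

lemma affm_an : AnalyticOnNhd ℝ (fun y : ℝ => 1/2 - y/2) (Ioo (0:ℝ) 1) := by
  have h : (fun y : ℝ => 1/2 - y/2) = fun y : ℝ => 1/2 - y * (1/2) := by funext y; ring
  rw [h]
  exact analyticOnNhd_const.sub (analyticOnNhd_id.mul analyticOnNhd_const)

lemma Pp_an : AnalyticOnNhd ℝ Pp (Ioo (0:ℝ) 1) := by
  have h : AnalyticOnNhd ℝ (fun y : ℝ => 1 - y^2) (Ioo (0:ℝ) 1) :=
    analyticOnNhd_const.sub (analyticOnNhd_id.pow 2)
  exact h.inv fun y hy => by nlinarith [hy.1, hy.2]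

lemma ggp_an : AnalyticOnNhd ℝ (fun y : ℝ => gg (1/2 + y/2)) (Ioo (0:ℝ) 1) :=
  gg_an.comp affp_an fun y hy => memp hy

lemma ggm_an : AnalyticOnNhd ℝ (fun y : ℝ => gg (1/2 - y/2)) (Ioo (0:ℝ) 1) :=
  gg_an.comp affm_an fun y hy => memm hy

lemma gg1p_an : AnalyticOnNhd ℝ (fun y : ℝ => gg1 (1/2 + y/2)) (Ioo (0:ℝ) 1) :=
  gg1_an.comp affp_an fun y hy => memp hy

lemma gg1m_an : AnalyticOnNhd ℝ (fun y : ℝ => gg1 (1/2 - y/2)) (Ioo (0:ℝ) 1) :=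
  gg1_an.comp affm_an fun y hy => memm hy

lemma Z1_an : AnalyticOnNhd ℝ Z1 (Ioo (0:ℝ) 1) :=
  gg1p_an.div (analyticOnNhd_const.mul ggp_an)
    (fun y hy => by have := gg_pos (memp hy); positivity)

lemma Z2_an : AnalyticOnNhd ℝ Z2 (Ioo (0:ℝ) 1) :=
  (gg1m_an.div (analyticOnNhd_const.mul ggm_an)
    (fun y hy => by have := gg_pos (memm hy); positivity)).neg

lemma Wf_an : AnalyticOnNhd ℝ Wf (Ioo (0:ℝ) 1) :=
  ggp_an.div ggm_an (fun y hy => (gg_pos (memm hy)).ne')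

lemma affp_deriv (y : ℝ) : HasDerivAt (fun t : ℝ => 1/2 + t/2) (1/2) y := by
  simpa using ((hasDerivAt_id y).div_const 2).const_add (1/2 : ℝ)

lemma affm_deriv (y : ℝ) : HasDerivAt (fun t : ℝ => 1/2 - t/2) (-(1/2)) y := by
  simpa using ((hasDerivAt_id y).div_const 2).const_sub (1/2 : ℝ)

lemma Pp_deriv {y : ℝ} (hy : y ∈ Ioo (0:ℝ) 1) : HasDerivAt Pp (2*y*(Pp y)^2) y := by
  obtain ⟨h1, h2⟩ := hy
  have hne : (1:ℝ) - y^2 ≠ 0 := by nlinarith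
  have h : HasDerivAt (fun t : ℝ => 1 - t^2) (-(2*y)) y := by
    have h0 := (hasDerivAt_pow 2 y).const_sub 1
    have he : -(((2:ℕ):ℝ) * y ^ (2-1)) = -(2*y) := by push_cast; ring
    rwa [he] at h0
  have h2' := h.inv hne
  have hval : 2*y*(Pp y)^2 = -(-(2*y)) / ((1:ℝ)-y^2)^2 := by
    unfold Pp
    field_simp
  rw [← hval] at h2'
  exact h2'

lemma Z1_deriv {y : ℝ} (hy : y ∈ Ioo (0:ℝ) 1) :
    HasDerivAt Z1 (2*y*Pp y*Z1 y + (5/36)*Pp y - (Z1 y)^2) y := by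
  obtain ⟨hy0, hy1⟩ := hy
  have hxp : (1/2 + y/2) ∈ Ioo (0:ℝ) 1 := ⟨by linarith, by linarith⟩
  have hg := gg_pos hxp
  have hG : (0:ℝ) < 2 * gg (1/2 + y/2) := by linarith
  have hne : (1:ℝ) - y^2 ≠ 0 := by nlinarith
  have hU1 : HasDerivAt (fun t : ℝ => gg1 (1/2 + t/2)) (gg2 (1/2+y/2) * (1/2)) y :=
    by have := (gg1_deriv hxp).comp y (affp_deriv y); exact this
  have hU : HasDerivAt (fun t : ℝ => 2 * gg (1/2 + t/2)) (2 * (gg1 (1/2+y/2) * (1/2))) y :=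
    by have := ((gg_deriv hxp).comp y (affp_deriv y)).const_mul 2; exact this
  have h := hU1.div hU hG.ne'
  have h1 : Pp y * (1 - y^2) = 1 := inv_mul_cancel₀ hne
  have h2 : Z1 y * (2 * gg (1/2+y/2)) = gg1 (1/2+y/2) :=
    div_mul_cancel₀ _ hG.ne'
  have h3 : gg2 (1/2+y/2) * (1 - y^2) =
      4 * (y * gg1 (1/2+y/2) + (5/36) * gg (1/2+y/2)) := by
    have hode := gg_ode hxp
    linear_combination 4 * hode
  have hval : 2*y*Pp y*Z1 y + (5/36)*Pp y - (Z1 y)^2 =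
      (gg2 (1/2+y/2) * (1/2) * (2 * gg (1/2+y/2)) -
        gg1 (1/2+y/2) * (2 * (gg1 (1/2+y/2) * (1/2)))) / (2 * gg (1/2+y/2)) ^ 2 := by
    rw [eq_div_iff (by positivity : ((2:ℝ) * gg (1/2+y/2))^2 ≠ 0)]
    linear_combination (gg (1/2+y/2) * gg2 (1/2+y/2)) * h1
      + (4*y*Pp y*gg (1/2+y/2) - 2*Z1 y*gg (1/2+y/2) - gg1 (1/2+y/2)) * h2
      - (Pp y * gg (1/2+y/2)) * h3
  rw [← hval] at h
  exact h

lemma Z2_deriv {y : ℝ} (hy : y ∈ Ioo (0:ℝ) 1) :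
    HasDerivAt Z2 (2*y*Pp y*Z2 y + (5/36)*Pp y - (Z2 y)^2) y := by
  obtain ⟨hy0, hy1⟩ := hy
  have hxm : (1/2 - y/2) ∈ Ioo (0:ℝ) 1 := ⟨by linarith, by linarith⟩
  have hg := gg_pos hxm
  have hG : (0:ℝ) < 2 * gg (1/2 - y/2) := by linarith
  have hne : (1:ℝ) - y^2 ≠ 0 := by nlinarith
  have hN : HasDerivAt (fun t : ℝ => gg1 (1/2 - t/2)) (gg2 (1/2-y/2) * (-(1/2))) y :=
    by have := (gg1_deriv hxm).comp y (affm_deriv y); exact this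
  have hD : HasDerivAt (fun t : ℝ => 2 * gg (1/2 - t/2)) (2 * (gg1 (1/2-y/2) * (-(1/2)))) y :=
    by have := ((gg_deriv hxm).comp y (affm_deriv y)).const_mul 2; exact this
  have h := (hN.div hD hG.ne').neg
  have h1 : Pp y * (1 - y^2) = 1 := inv_mul_cancel₀ hne
  have h2 : Z2 y * (2 * gg (1/2-y/2)) = -(gg1 (1/2-y/2)) := by
    rw [show Z2 y = -(gg1 (1/2-y/2) / (2 * gg (1/2-y/2))) from rfl, neg_mul,
      div_mul_cancel₀ _ hG.ne']
  have h3 : gg2 (1/2-y/2) * (1 - y^2) =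
      4 * (-y * gg1 (1/2-y/2) + (5/36) * gg (1/2-y/2)) := by
    have hode := gg_ode hxm
    linear_combination 4 * hode
  have hval : 2*y*Pp y*Z2 y + (5/36)*Pp y - (Z2 y)^2 =
      -((gg2 (1/2-y/2) * (-(1/2)) * (2 * gg (1/2-y/2)) -
        gg1 (1/2-y/2) * (2 * (gg1 (1/2-y/2) * (-(1/2))))) / (2 * gg (1/2-y/2)) ^ 2) := by
    rw [← neg_div, eq_div_iff (by positivity : ((2:ℝ) * gg (1/2-y/2))^2 ≠ 0)]
    linear_combination (gg (1/2-y/2) * gg2 (1/2-y/2)) * h1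
      + (4*y*Pp y*gg (1/2-y/2) - 2*Z2 y*gg (1/2-y/2) + gg1 (1/2-y/2)) * h2
      - (Pp y * gg (1/2-y/2)) * h3
  rw [← hval] at h
  exact h

lemma Wf_deriv {y : ℝ} (hy : y ∈ Ioo (0:ℝ) 1) :
    HasDerivAt Wf (Wf y * Z1 y - Wf y * Z2 y) y := by
  obtain ⟨hy0, hy1⟩ := hy
  have hxp : (1/2 + y/2) ∈ Ioo (0:ℝ) 1 := ⟨by linarith, by linarith⟩
  have hxm : (1/2 - y/2) ∈ Ioo (0:ℝ) 1 := ⟨by linarith, by linarith⟩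
  have hgp := gg_pos hxp
  have hgm := gg_pos hxm
  have hU : HasDerivAt (fun t : ℝ => gg (1/2 + t/2)) (gg1 (1/2+y/2) * (1/2)) y :=
    by have := (gg_deriv hxp).comp y (affp_deriv y); exact this
  have hV : HasDerivAt (fun t : ℝ => gg (1/2 - t/2)) (gg1 (1/2-y/2) * (-(1/2))) y :=
    by have := (gg_deriv hxm).comp y (affm_deriv y); exact this
  have h := hU.div hV hgm.ne'
  have hval : Wf y * Z1 y - Wf y * Z2 y =
      (gg1 (1/2+y/2) * (1/2) * gg (1/2-y/2) -
        gg (1/2+y/2) * (gg1 (1/2-y/2) * (-(1/2)))) / gg (1/2-y/2) ^ 2 := by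
    unfold Wf Z1 Z2
    set Gp := gg (1/2+y/2)
    set Gm := gg (1/2-y/2)
    set G1p := gg1 (1/2+y/2)
    set G1m := gg1 (1/2-y/2)
    field_simp
  rw [← hval] at h
  exact h

open MvPolynomial

lemma degX3 {n : ℕ} (i j k : Fin n) :
    ((X i * X j * X k : MvPolynomial (Fin n) ℝ)).totalDegree ≤ 3 := by
  refine (totalDegree_mul _ _).trans ?_
  have h1 : ((X i * X j : MvPolynomial (Fin n) ℝ)).totalDegree ≤ 2 := by
    refine (totalDegree_mul _ _).trans ?_
    rw [totalDegree_X, totalDegree_X]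
  rw [totalDegree_X]
  omega


/-- The function
`y ↦ ₂F₁(1/6,5/6;1;1/2+y/2) / ₂F₁(1/6,5/6;1;1/2−y/2)` is a Pfaffian function of order `9` and
degree `(3,1)` on `(0,1)`. -/
theorem hyp2F1_ratio_pfaffian :
    IsPfaffianFunction 9 3 1 0 1
      (fun y : ℝ =>
        hyp2F1 (1/6) (5/6) 1 (1/2 + y/2) / hyp2F1 (1/6) (5/6) 1 (1/2 - y/2)) := by
  refine ⟨![Pp, Z1, Z2, Wf, fun _ => 0, fun _ => 0, fun _ => 0, fun _ => 0, fun _ => 0],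
    ⟨?_, ?_⟩, X 4, ?_, ?_⟩
  · intro i
    fin_cases i
    exacts [Pp_an, Z1_an, Z2_an, Wf_an, analyticOnNhd_const, analyticOnNhd_const,
      analyticOnNhd_const, analyticOnNhd_const, analyticOnNhd_const]
  · intro i
    fin_cases i
    · refine ⟨(2:ℝ) • (X 0 * X 1 ^ 2), ?_, fun x hx => ?_⟩
      · refine (totalDegree_smul_le _ _).trans ((totalDegree_mul _ _).trans ?_)
        rw [totalDegree_X, totalDegree_X_pow]
      · have h := Pp_deriv hx
        refine h.congr_deriv ?_
        symm
        simp only [map_add, map_sub, map_mul, map_pow, MvPolynomial.smul_eval,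
          MvPolynomial.eval_C, MvPolynomial.eval_X, Fin.cons_zero]
        show 2 * (x * Pp x ^ 2) = 2 * x * Pp x ^ 2
        ring
    · refine ⟨(2:ℝ) • (X 0 * X 1 * X 2) + (5/36:ℝ) • X 1 - X 2 ^ 2, ?_, fun x hx => ?_⟩
      · refine (totalDegree_sub _ _).trans (max_le ((totalDegree_add _ _).trans
          (max_le ((totalDegree_smul_le _ _).trans (degX3 _ _ _))
            ((totalDegree_smul_le _ _).trans (by rw [totalDegree_X]; norm_num)))) ?_)
        rw [totalDegree_X_pow]; norm_num
      · have h := Z1_deriv hx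
        refine h.congr_deriv ?_
        symm
        simp only [map_add, map_sub, map_mul, map_pow, MvPolynomial.smul_eval,
          MvPolynomial.eval_C, MvPolynomial.eval_X, Fin.cons_zero]
        show 2 * (x * Pp x * Z1 x) + 5/36 * Pp x - Z1 x ^ 2
          = 2 * x * Pp x * Z1 x + 5 / 36 * Pp x - Z1 x ^ 2
        ring
    · refine ⟨(2:ℝ) • (X 0 * X 1 * X 3) + (5/36:ℝ) • X 1 - X 3 ^ 2, ?_, fun x hx => ?_⟩
      · refine (totalDegree_sub _ _).trans (max_le ((totalDegree_add _ _).trans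
          (max_le ((totalDegree_smul_le _ _).trans (degX3 _ _ _))
            ((totalDegree_smul_le _ _).trans (by rw [totalDegree_X]; norm_num)))) ?_)
        rw [totalDegree_X_pow]; norm_num
      · have h := Z2_deriv hx
        refine h.congr_deriv ?_
        symm
        simp only [map_add, map_sub, map_mul, map_pow, MvPolynomial.smul_eval,
          MvPolynomial.eval_C, MvPolynomial.eval_X, Fin.cons_zero]
        show 2 * (x * Pp x * Z2 x) + 5/36 * Pp x - Z2 x ^ 2
          = 2 * x * Pp x * Z2 x + 5 / 36 * Pp x - Z2 x ^ 2
        ring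
    · refine ⟨X 4 * X 2 - X 4 * X 3, ?_, fun x hx => ?_⟩
      · refine (totalDegree_sub _ _).trans (max_le ((totalDegree_mul _ _).trans ?_)
          ((totalDegree_mul _ _).trans ?_)) <;> rw [totalDegree_X, totalDegree_X] <;> norm_num
      · have h := Wf_deriv hx
        refine h.congr_deriv ?_
        symm
        simp only [map_add, map_sub, map_mul, map_pow, MvPolynomial.smul_eval,
          MvPolynomial.eval_C, MvPolynomial.eval_X, Fin.cons_zero]
        rfl
    all_goals exact ⟨0, by simp, fun x hx => by
      simpa using (hasDerivAt_const x (0:ℝ))⟩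
  · exact le_of_eq (totalDegree_X _)
  · funext y
    simp only [MvPolynomial.eval_X]
    rfl
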